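/- Let 0 = t_0 < t_1 < ⋯ < t_N = T be a mesh with steps τ_k = t_k − t_{k−1}, let α ∈ (0,1), and let a^{(n)}_{n−k} be the L1 kernel. Then for every fixed n with 2 ≤ n ≤ N and every k with 1 ≤ k ≤ n−1 one has a^{(n)}_{n−k−1} − a^{(n)}_{n−k} > (1/2)[ω_{1−α}(t_n − t_k) − ω_{1−α}(t_n − t_{k−1})]. -/

import Mathlib

open Real Finset

/-- The kernel `ω_μ(s) = s^(μ-1)/Γ(μ)`. -/
noncomputable def omegaK (μ s : ℝ) : ℝ := s ^ (μ - 1) / Real.Gamma μ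

/-- The L1 kernel: `L1K α t n k` is `a^{(n)}_{n-k}`. -/
noncomputable def L1K (α : ℝ) (t : ℕ → ℝ) (n k : ℕ) : ℝ :=
  (omegaK (2 - α) (t n - t (k - 1)) - omegaK (2 - α) (t n - t k)) / (t k - t (k - 1))

/-- `x ↦ x ^ (-a)` is convex on `(0, ∞)` for `a > 0`. -/
lemma convexOn_rpow_neg' {a : ℝ} (ha : 0 < a) :
    ConvexOn ℝ (Set.Ioi (0:ℝ)) fun x : ℝ ↦ x ^ (-a) := by
  have hi : interior (Set.Ioi (0:ℝ)) = Set.Ioi 0 := isOpen_Ioi.interior_eq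
  refine convexOn_of_hasDerivWithinAt2_nonneg (f' := fun x => -a * x ^ (-a - 1))
    (f'' := fun x => (-a) * ((-a - 1) * x ^ (-a - 1 - 1))) (convex_Ioi 0) ?_ ?_ ?_ ?_
  · intro x hx
    exact (Real.continuousAt_rpow_const x (-a) (Or.inl (ne_of_gt hx))).continuousWithinAt
  · intro x hx
    rw [hi] at hx ⊢
    exact ((Real.hasDerivAt_rpow_const (Or.inl (ne_of_gt hx))).hasDerivWithinAt)
  · intro x hx
    rw [hi] at hx ⊢
    exact (((Real.hasDerivAt_rpow_const (p := -a - 1)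
      (Or.inl (ne_of_gt hx))).const_mul (-a)).hasDerivWithinAt)
  · intro x hx
    rw [hi] at hx
    have h1 : (0:ℝ) ≤ x ^ (-a - 1 - 1) := Real.rpow_nonneg (le_of_lt hx) _
    nlinarith [mul_nonneg (mul_nonneg ha.le (show (0:ℝ) ≤ a + 1 by linarith)) h1]

/-- Strict lower bound for the slope of `x ↦ x ^ p` by the tangent at the right endpoint. -/
lemma slope_rpow_gt {p u v : ℝ} (hp0 : 0 < p) (hp1 : p < 1) (hu : 0 ≤ u) (huv : u < v) :
    p * (v - u) * v ^ (p - 1) < v ^ p - u ^ p := by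
  have hd : 0 < v - u := by linarith
  obtain ⟨c, hc, hderiv⟩ := exists_hasDerivAt_eq_slope (fun x : ℝ => x ^ p)
    (fun x => p * x ^ (p - 1)) huv
    (fun x _ => (Real.continuousAt_rpow_const x p (Or.inr hp0.le)).continuousWithinAt)
    (fun x hx => Real.hasDerivAt_rpow_const (Or.inl (ne_of_gt (lt_of_le_of_lt hu hx.1))))
  have hc0 : 0 < c := lt_of_le_of_lt hu hc.1
  have hlt : v ^ (p - 1) < c ^ (p - 1) :=
    Real.rpow_lt_rpow_of_neg hc0 hc.2 (by linarith)
  rw [eq_div_iff (ne_of_gt hd)] at hderiv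
  nlinarith [mul_pos hp0 hd]

/-- Trapezoid upper bound for the slope of `x ↦ x ^ p`, `0 < p < 1`, on `[v, w]` with `0 < v`. -/
lemma slope_rpow_le {p v w : ℝ} (hp0 : 0 < p) (hp1 : p < 1) (hv : 0 < v) (hvw : v < w) :
    w ^ p - v ^ p ≤ p * (w - v) * (v ^ (p - 1) + w ^ (p - 1)) / 2 := by
  have hw : 0 < w := hv.trans hvw
  have hd : 0 < w - v := by linarith
  have hq : (-1:ℝ) < p - 1 := by linarith
  have hi : (∫ x in v..w, x ^ (p - 1)) = (w ^ p - v ^ p) / p := by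
    rw [integral_rpow (Or.inl hq)]
    norm_num
  have hconv := convexOn_rpow_neg' (a := 1 - p) (by linarith)
  have hexp : -(1 - p) = p - 1 := by ring
  set A := v ^ (p - 1) with hA
  set B := w ^ (p - 1) with hB
  set L : ℝ → ℝ := fun x => ((w * A - v * B) / (w - v)) + ((B - A) / (w - v)) * x with hL
  have hpt : ∀ x ∈ Set.Icc v w, x ^ (p - 1) ≤ L x := by
    intro x hx
    have hx0 : 0 < x := lt_of_lt_of_le hv hx.1
    have ha : (0:ℝ) ≤ (w - x) / (w - v) := div_nonneg (by linarith [hx.2]) hd.le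
    have hb : (0:ℝ) ≤ (x - v) / (w - v) := div_nonneg (by linarith [hx.1]) hd.le
    have hab : (w - x) / (w - v) + (x - v) / (w - v) = 1 := by
      field_simp
      ring
    have hcomb := hconv.2 (Set.mem_Ioi.mpr hv) (Set.mem_Ioi.mpr hw) ha hb hab
    have hxeq : ((w - x) / (w - v)) • v + ((x - v) / (w - v)) • w = x := by
      simp only [smul_eq_mul]
      field_simp
      ring
    rw [hxeq, hexp] at hcomb
    refine le_trans hcomb ?_
    rw [hL]
    have : (w - x) / (w - v) * v ^ (p - 1) + (x - v) / (w - v) * w ^ (p - 1)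
        = (w * A - v * B) / (w - v) + (B - A) / (w - v) * x := by
      rw [hA, hB]; field_simp; ring
    exact le_of_eq this
  have hfint : IntervalIntegrable (fun x : ℝ => x ^ (p - 1)) MeasureTheory.volume v w := by
    apply ContinuousOn.intervalIntegrable
    intro x hx
    rw [Set.uIcc_of_le hvw.le] at hx
    exact (Real.continuousAt_rpow_const x (p - 1)
      (Or.inl (ne_of_gt (lt_of_lt_of_le hv hx.1)))).continuousWithinAt
  have hLint : IntervalIntegrable L MeasureTheory.volume v w := by
    apply Continuous.intervalIntegrable
    fun_prop
  have hmono := intervalIntegral.integral_mono_on hvw.le hfint hLint hpt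
  have hLval : (∫ x in v..w, L x) = (w - v) * (A + B) / 2 := by
    have h2 : IntervalIntegrable (fun x : ℝ => (B - A) / (w - v) * x)
        MeasureTheory.volume v w := (continuous_const.mul continuous_id').intervalIntegrable _ _
    simp only [hL]
    rw [intervalIntegral.integral_add intervalIntegrable_const h2,
      intervalIntegral.integral_const, intervalIntegral.integral_const_mul, integral_id]
    simp only [smul_eq_mul]
    field_simp
    ring
  rw [hi, hLval] at hmono
  rw [div_le_iff₀ hp0] at hmono
  nlinarith

lemma mesh_lt {N : ℕ} {t : ℕ → ℝ} (hmesh : ∀ k, 1 ≤ k → k ≤ N → t (k - 1) < t k) :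
    ∀ j, j ≤ N → ∀ i, i < j → t i < t j := by
  intro j
  induction j with
  | zero => omega
  | succ m ih =>
    intro hj i hi
    have hm : t m < t (m + 1) := by
      have := hmesh (m + 1) (by omega) hj
      simpa using this
    rcases Nat.lt_succ_iff_lt_or_eq.mp hi with h | h
    · exact (ih (by omega) i h).trans hm
    · rw [h]; exact hm

theorem L1_kernel_difference_bound
    (T : ℝ) (hT : 0 < T) (N : ℕ) (hN : 1 ≤ N)
    (t : ℕ → ℝ) (ht0 : t 0 = 0) (htN : t N = T)
    (hmesh : ∀ k, 1 ≤ k → k ≤ N → t (k - 1) < t k)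
    (α : ℝ) (hα0 : 0 < α) (hα1 : α < 1) :
    ∀ n, 2 ≤ n → n ≤ N → ∀ k, 1 ≤ k → k ≤ n - 1 →
      L1K α t n (k + 1) - L1K α t n k >
        (1 / 2) * (omegaK (1 - α) (t n - t k) - omegaK (1 - α) (t n - t (k - 1))) := by
  intro n hn2 hnN k hk1 hk2
  have hp0 : (0:ℝ) < 1 - α := by linarith
  have hp1 : (1:ℝ) - α < 1 := by linarith
  have hΓ1 : 0 < Real.Gamma (1 - α) := Real.Gamma_pos_of_pos hp0
  have hΓ2 : Real.Gamma (2 - α) = (1 - α) * Real.Gamma (1 - α) := by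
    rw [show (2:ℝ) - α = (1 - α) + 1 by ring, Real.Gamma_add_one (ne_of_gt hp0)]
  have hkn : k + 1 ≤ n := by omega
  set u := t n - t (k + 1) with hu
  set v := t n - t k with hv
  set w := t n - t (k - 1) with hw
  have hu0 : 0 ≤ u := by
    rcases eq_or_lt_of_le hkn with h | h
    · rw [hu, h]; simp
    · have := mesh_lt hmesh n hnN (k + 1) h
      rw [hu]; linarith
  have huv : u < v := by
    have : t k < t (k + 1) := by
      have := hmesh (k + 1) (by omega) (by omega)
      simpa using this
    rw [hu, hv]; linarith
  have hvw : v < w := by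
    have := hmesh k hk1 (by omega)
    rw [hv, hw]; linarith
  have hv0 : 0 < v := by linarith
  have hw0 : 0 < w := by linarith
  have hd1 : 0 < v - u := by linarith
  have hd2 : 0 < w - v := by linarith
  have hA := slope_rpow_gt (p := 1 - α) hp0 hp1 hu0 huv
  have hB := slope_rpow_le (p := 1 - α) hp0 hp1 hv0 hvw
  rw [show (1:ℝ) - α - 1 = -α by ring] at hA hB
  have hne1 : v - u ≠ 0 := ne_of_gt hd1
  have hne2 : w - v ≠ 0 := ne_of_gt hd2
  have hne3 : (1:ℝ) - α ≠ 0 := ne_of_gt hp0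
  have hne4 : Real.Gamma (1 - α) ≠ 0 := ne_of_gt hΓ1
  simp only [L1K, omegaK, Nat.add_sub_cancel]
  rw [← hu, ← hv, ← hw]
  rw [show t (k + 1) - t k = v - u by rw [hu, hv]; ring,
    show t k - t (k - 1) = w - v by rw [hv, hw]; ring]
  rw [show (2:ℝ) - α - 1 = 1 - α by ring, show (1:ℝ) - α - 1 = -α by ring, hΓ2, gt_iff_lt]
  rw [show (1:ℝ) / 2 * (v ^ (-α) / Real.Gamma (1 - α) - w ^ (-α) / Real.Gamma (1 - α))
      = ((1 - α) * v ^ (-α) - (1 - α) * (v ^ (-α) + w ^ (-α)) / 2)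
        / ((1 - α) * Real.Gamma (1 - α)) by field_simp [hne3, hne4]; ring]
  rw [show (v ^ (1 - α) / ((1 - α) * Real.Gamma (1 - α))
        - u ^ (1 - α) / ((1 - α) * Real.Gamma (1 - α))) / (v - u)
      - (w ^ (1 - α) / ((1 - α) * Real.Gamma (1 - α))
        - v ^ (1 - α) / ((1 - α) * Real.Gamma (1 - α))) / (w - v)
      = ((v ^ (1 - α) - u ^ (1 - α)) / (v - u) - (w ^ (1 - α) - v ^ (1 - α)) / (w - v))
        / ((1 - α) * Real.Gamma (1 - α)) by field_simp]
  rw [div_lt_div_iff_of_pos_right (by positivity)]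
  have hSA : (1 - α) * v ^ (-α) < (v ^ (1 - α) - u ^ (1 - α)) / (v - u) := by
    rw [lt_div_iff₀ hd1]
    nlinarith
  have hSB : (w ^ (1 - α) - v ^ (1 - α)) / (w - v) ≤ (1 - α) * (v ^ (-α) + w ^ (-α)) / 2 := by
    rw [div_le_iff₀ hd2]
    nlinarith
  linarith
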